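/- Let M > 0 and τ ≥ 0 satisfy condition (★), and write t* := t*(M,τ). Then ‖y^τ(t*; y₀, u)‖ ≥ r for every u ∈ U_M; in particular, every optimal control u* for (TP)^τ_M steers the state exactly onto the sphere: ‖y^τ(t*; y₀, u*)‖ = r. -/

import Mathlib

open RealInnerProductSpace Filter

theorem stmt_6
    {H : Type*} [NormedAddCommGroup H] [InnerProductSpace ℝ H] [CompleteSpace H]
    (lam : ℝ) (hlam : 0 < lam)
    (S : ℝ → H →L[ℝ] H)
    (hS0 : S 0 = ContinuousLinearMap.id ℝ H)
    (hSadd : ∀ s t : ℝ, 0 ≤ s → 0 ≤ t → S (s + t) = (S s).comp (S t))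
    (hSsa : ∀ t : ℝ, 0 ≤ t → ∀ x z : H, ⟪S t x, z⟫ = ⟪x, S t z⟫)
    (hScont : ∀ y : H, ContinuousOn (fun t => S t y) (Set.Ici (0 : ℝ)))
    (hSdecay : ∀ t : ℝ, 0 ≤ t → ∀ y : H, ‖S t y‖ ≤ Real.exp (-(lam * t)) * ‖y‖)
    (P : H →L[ℝ] H)
    (hPsa : ∀ x z : H, ⟪P x, z⟫ = ⟪x, P z⟫)
    (hPnorm : ∀ u : H, ‖P u‖ ≤ ‖u‖)
    (y₀ : H) (r : ℝ) (hr : 0 < r)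
    (tS : ℝ → ℝ → ℝ)
    (htS : ∀ M τ : ℝ, tS M τ =
      sInf {T : ℝ | τ ≤ T ∧ ∃ u : H, ‖u‖ ≤ M ∧ ‖S T y₀ + S (T - τ) (P u)‖ ≤ r})
    (M τ : ℝ) (hM : 0 < M) (hτ : 0 ≤ τ)
    (hstar : ∀ u : H, ‖u‖ ≤ M → r < ‖S τ y₀ + P u‖) :
    (∀ u : H, ‖u‖ ≤ M → r ≤ ‖S (tS M τ) y₀ + S (tS M τ - τ) (P u)‖) ∧
    (∀ u : H, ‖u‖ ≤ M → ‖S (tS M τ) y₀ + S (tS M τ - τ) (P u)‖ ≤ r →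
      ‖S (tS M τ) y₀ + S (tS M τ - τ) (P u)‖ = r) := by
  set A : Set ℝ := {T : ℝ | τ ≤ T ∧ ∃ u : H, ‖u‖ ≤ M ∧ ‖S T y₀ + S (T - τ) (P u)‖ ≤ r}
    with hA
  have htA : tS M τ = sInf A := htS M τ
  -- A is nonempty
  have hAne : A.Nonempty := by
    have hlim : Tendsto (fun T : ℝ => Real.exp (-(lam * T)) * ‖y₀‖) atTop (nhds (0 * ‖y₀‖)) := by
      refine Tendsto.mul_const _ ?_
      refine Real.tendsto_exp_atBot.comp ?_
      have h1 : Tendsto (fun T : ℝ => lam * T) atTop atTop :=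
        Tendsto.const_mul_atTop hlam tendsto_id
      exact tendsto_neg_atBot_iff.mpr h1
    rw [zero_mul] at hlim
    have hev : ∀ᶠ T : ℝ in atTop, Real.exp (-(lam * T)) * ‖y₀‖ < r :=
      hlim.eventually_lt_const hr
    obtain ⟨T, hT1, hT2⟩ := ((eventually_ge_atTop τ).and hev).exists
    refine ⟨T, hT1, 0, by simpa using hM.le, ?_⟩
    have h0 : (S (T - τ)) (P 0) = 0 := by simp
    rw [h0, add_zero]
    exact (hSdecay T (hτ.trans hT1) y₀).trans hT2.le
  have hbdd : BddBelow A := ⟨τ, fun T hT => hT.1⟩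
  have hτt : τ ≤ sInf A := le_csInf hAne fun T hT => hT.1
  have key : ∀ u : H, ‖u‖ ≤ M → r ≤ ‖S (sInf A) y₀ + S (sInf A - τ) (P u)‖ := by
    intro u hu
    rcases eq_or_lt_of_le hτt with heq | hlt
    · rw [← heq, sub_self, hS0]
      simpa using (hstar u hu).le
    · by_contra hcon
      push_neg at hcon
      -- continuity of the state on [τ, ∞)
      have hcont : ContinuousOn (fun T : ℝ => ‖S T y₀ + S (T - τ) (P u)‖) (Set.Ici τ) := by
        refine ContinuousOn.norm (ContinuousOn.add ?_ ?_)
        · exact (hScont y₀).mono fun x hx => le_trans hτ hx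
        · refine (hScont (P u)).comp ((continuous_id.sub continuous_const).continuousOn) ?_
          intro x hx
          simpa [sub_nonneg] using (hx : τ ≤ x)
      have hct : ContinuousWithinAt (fun T : ℝ => ‖S T y₀ + S (T - τ) (P u)‖)
          (Set.Ici τ) (sInf A) := hcont (sInf A) hτt
      have hmem : (fun T : ℝ => ‖S T y₀ + S (T - τ) (P u)‖) ⁻¹' Set.Iio r
          ∈ nhdsWithin (sInf A) (Set.Ici τ) := hct (Iio_mem_nhds hcon)
      obtain ⟨ε, hε, hsub⟩ := Metric.mem_nhdsWithin_iff.mp hmem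
      set T : ℝ := max τ (sInf A - ε / 2) with hTdef
      have hTlt : T < sInf A := by
        apply max_lt hlt
        linarith
      have hTball : T ∈ Metric.ball (sInf A) ε := by
        rw [Metric.mem_ball, Real.dist_eq, abs_of_nonpos (by linarith)]
        have : sInf A - ε / 2 ≤ T := le_max_right _ _
        linarith
      have hTA : T ∈ A := by
        refine ⟨le_max_left _ _, u, hu, ?_⟩
        exact le_of_lt (hsub ⟨hTball, by rw [Set.mem_Ici, hTdef]; exact le_max_left _ _⟩)
      exact absurd (csInf_le hbdd hTA) (not_le.mpr hTlt)
  rw [htA]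
  exact ⟨key, fun u hu hle => le_antisymm hle (key u hu)⟩
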